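/- Let H ~ Hyp(n,i,k) be a hypergeometric random variable, and fix an integer m ∈ {0,1,...,min{i,k}}. Then P(H ≥ m) = (C(k,m)·C(i,m)/C(n,m)) · E(1/C(Z_m + m, m)), where Z_m ~ Hyp(n−m, i−m, k−m). -/

import Mathlib

/-- The probability mass function of the hypergeometric distribution `Hyp(n,i,k)`. -/
noncomputable def hypPMF (n i k j : ℕ) : ℝ :=
  ((Nat.choose i j : ℝ) * (Nat.choose (n - i) (k - j) : ℝ)) / (Nat.choose n k : ℝ)

/-- `P(H ≥ t)` for `H ~ Hyp(n,i,k)`. -/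
noncomputable def hypTail (n i k : ℕ) (t : ℝ) : ℝ :=
  ∑ j ∈ Finset.range (k + 1), if t ≤ (j : ℝ) then hypPMF n i k j else 0

lemma hyp_term_eq (n i k m j : ℕ) (hk2 : k ≤ n) (hi2 : i ≤ n) (hmi : m ≤ i) (hmk : m ≤ k) :
    hypPMF n i k (m + j) =
      ((Nat.choose k m : ℝ) * (Nat.choose i m : ℝ) / (Nat.choose n m : ℝ)) *
        ((1 / (Nat.choose (j + m) m : ℝ)) * hypPMF (n - m) (i - m) (k - m) j) := by
  have hni : (n - m) - (i - m) = n - i := by omega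
  have hkj : (k - m) - j = k - (m + j) := by omega
  have h1 : (Nat.choose n k : ℝ) ≠ 0 := by
    exact_mod_cast (Nat.choose_pos hk2).ne'
  have h2 : (Nat.choose n m : ℝ) ≠ 0 := by
    exact_mod_cast (Nat.choose_pos (le_trans hmk hk2)).ne'
  have h3 : (Nat.choose (j + m) m : ℝ) ≠ 0 := by
    exact_mod_cast (Nat.choose_pos (Nat.le_add_left m j)).ne'
  have h4 : (Nat.choose (n - m) (k - m) : ℝ) ≠ 0 := by
    exact_mod_cast (Nat.choose_pos (Nat.sub_le_sub_right hk2 m)).ne'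
  have hnk : (Nat.choose n k : ℝ) * (Nat.choose k m : ℝ) =
      (Nat.choose n m : ℝ) * (Nat.choose (n - m) (k - m) : ℝ) := by
    exact_mod_cast congrArg Nat.cast (Nat.choose_mul (n := n) hmk)
  by_cases hij : m + j ≤ i
  · have hik : (Nat.choose i (m + j) : ℝ) * (Nat.choose (m + j) m : ℝ) =
        (Nat.choose i m : ℝ) * (Nat.choose (i - m) (m + j - m) : ℝ) := by
      exact_mod_cast congrArg Nat.cast (Nat.choose_mul (n := i) (Nat.le_add_right m j))
    simp only [Nat.add_sub_cancel_left] at hik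
    rw [show j + m = m + j by ring] at h3
    unfold hypPMF
    rw [hni, hkj]
    field_simp
    rw [show j + m = m + j by ring]
    rw [eq_div_iff (by positivity)]
    linear_combination ((Nat.choose (n - i) (k - (m + j)) : ℝ) * (Nat.choose n m : ℝ) * (Nat.choose (n - m) (k - m) : ℝ)) * hik - ((Nat.choose i m : ℝ) * (Nat.choose (i - m) j : ℝ) * (Nat.choose (n - i) (k - (m + j)) : ℝ)) * hnk
  · have e1 : Nat.choose i (m + j) = 0 := Nat.choose_eq_zero_of_lt (by omega)
    have e2 : Nat.choose (i - m) j = 0 := Nat.choose_eq_zero_of_lt (by omega)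
    unfold hypPMF
    rw [e1, e2]
    simp

/-- For `H ~ Hyp(n,i,k)` and an integer `m ∈ {0,1,…,min{i,k}}`,
`P(H ≥ m) = (C(k,m)·C(i,m)/C(n,m)) · E(1/C(Z_m + m, m))`, where
`Z_m ~ Hyp(n−m, i−m, k−m)`; the expectation is written out as a sum over the
support of `Z_m`, which is contained in `{0,…,k−m}`. -/
theorem hyp_tail_eq_inverse_factorial_moment (n i k m : ℕ) (hn : 0 < n) (hk1 : 1 ≤ k)
    (hk2 : k ≤ n) (hi1 : 1 ≤ i) (hi2 : i ≤ n) (hm : m ≤ min i k) :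
    hypTail n i k (m : ℝ) =
      ((Nat.choose k m : ℝ) * (Nat.choose i m : ℝ) / (Nat.choose n m : ℝ)) *
        ∑ j ∈ Finset.range (k - m + 1),
          (1 / (Nat.choose (j + m) m : ℝ)) * hypPMF (n - m) (i - m) (k - m) j := by
  have hmi : m ≤ i := le_trans hm (min_le_left _ _)
  have hmk : m ≤ k := le_trans hm (min_le_right _ _)
  unfold hypTail
  rw [Finset.mul_sum]
  have step1 : (∑ j ∈ Finset.range (k + 1), if (m : ℝ) ≤ (j : ℝ) then hypPMF n i k j else 0)
      = ∑ j ∈ Finset.Ico m (k + 1), hypPMF n i k j := by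
    rw [Finset.range_eq_Ico, ← Finset.sum_filter]
    apply Finset.sum_congr _ (fun _ _ => rfl)
    ext j
    simp [Nat.cast_le, Nat.lt_succ_iff]
  rw [step1, Finset.sum_Ico_eq_sum_range]
  have hlen : k + 1 - m = k - m + 1 := by omega
  rw [hlen]
  apply Finset.sum_congr rfl
  intro j _
  exact hyp_term_eq n i k m j hk2 hi2 hmi hmk
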